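/- Evolution of the discrete total momentum (semi-discrete CPIC in 3D): under the same hypotheses — w_p ≥ 0, trajectories satisfying v̇_p = E_p + v_p × B_p − U_p with U_p = Σ_q w_q ψ(x_p − x_q) A(v_p − v_q) b_{p,q}, ψ even, b_{q,p} = −b_{p,q} — the collisional forces exert no net effect: d/dt Σ_p w_p v_p = Σ_p w_p (E_p + v_p × B_p). -/

import Mathlib

open Matrix
open scoped Classical

/-- The Landau collision kernel `A(z) = C ‖z‖^(γ+2) (I − z zᵀ/‖z‖²)` for `z ≠ 0`,
with the convention `A(0) = 0`. -/
noncomputable def landauA (d : ℕ) (C γ : ℝ) (z : Fin d → ℝ) :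
    Matrix (Fin d) (Fin d) ℝ :=
  if z = 0 then 0
  else (C * Real.sqrt (z ⬝ᵥ z) ^ (γ + 2)) •
    (1 - (z ⬝ᵥ z)⁻¹ • Matrix.vecMulVec z z)

lemma landauA_neg (d : ℕ) (C γ : ℝ) (z : Fin d → ℝ) :
    landauA d C γ (-z) = landauA d C γ z := by
  unfold landauA
  by_cases h : z = 0
  · simp [h]
  · have h' : -z ≠ 0 := fun hz => h (by simpa using congrArg Neg.neg hz)
    rw [if_neg h, if_neg h']
    have h1 : (-z) ⬝ᵥ (-z) = z ⬝ᵥ z := by simp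
    have h2 : Matrix.vecMulVec (-z) (-z) = Matrix.vecMulVec z z := by
      ext i j; simp [Matrix.vecMulVec_apply]
    rw [h1, h2]

/-- Evolution of the discrete total momentum (semi-discrete CPIC in 3D): if the
particle velocities satisfy `v̇_p = E_p + v_p × B_p − U_p`, with `U_p` the discrete
Landau collision field (`ψ` even, `b_{q,p} = −b_{p,q}`), then the collisional forces
exert no net effect: `d/dt Σ_p w_p v_p = Σ_p w_p (E_p + v_p × B_p)`. -/
theorem cpic_momentum_evolution {N : ℕ} (C γ : ℝ) (hC : 0 < C)
    (w : Fin N → ℝ) (hw : ∀ p, 0 ≤ w p)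
    (x : Fin N → ℝ → Fin 3 → ℝ) (v : Fin N → ℝ → Fin 3 → ℝ)
    (ψ : (Fin 3 → ℝ) → ℝ) (hψ : ∀ y, ψ (-y) = ψ y)
    (b : Fin N → Fin N → ℝ → Fin 3 → ℝ) (hb : ∀ p q t, b q p t = -(b p q t))
    (U : Fin N → ℝ → Fin 3 → ℝ)
    (hU : ∀ p t, U p t = ∑ q : Fin N,
      (w q * ψ (x p t - x q t)) • (landauA 3 C γ (v p t - v q t)).mulVec (b p q t))
    (E : Fin N → ℝ → Fin 3 → ℝ) (B : Fin N → ℝ → Fin 3 → ℝ)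
    (hv : ∀ p t, HasDerivAt (v p)
      (E p t + crossProduct (v p t) (B p t) - U p t) t)
    (t : ℝ) :
    HasDerivAt (fun s => ∑ p : Fin N, w p • v p s)
      (∑ p : Fin N, w p • (E p t + crossProduct (v p t) (B p t))) t := by
  set F : Fin N → Fin N → (Fin 3 → ℝ) := fun p q =>
    w p • ((w q * ψ (x p t - x q t)) •
      (landauA 3 C γ (v p t - v q t)).mulVec (b p q t))
  have hanti : ∀ p q, F q p = -F p q := by
    intro p q
    have hx : x q t - x p t = -(x p t - x q t) := by abel
    have hvv : v q t - v p t = -(v p t - v q t) := by abel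
    simp only [F, hx, hψ, hvv, landauA_neg, hb p q t, Matrix.mulVec_neg,
      smul_neg]
    rw [smul_smul, smul_smul]
    congr 2
    ring
  have key : ∑ p : Fin N, w p • U p t = 0 := by
    have : ∑ p : Fin N, w p • U p t = ∑ p : Fin N, ∑ q : Fin N, F p q := by
      refine Finset.sum_congr rfl fun p _ => ?_
      rw [hU, Finset.smul_sum]
    rw [this]
    have hswap : ∑ p : Fin N, ∑ q : Fin N, F p q
        = ∑ p : Fin N, ∑ q : Fin N, F q p := Finset.sum_comm
    have h2 : (2 : ℝ) • (∑ p : Fin N, ∑ q : Fin N, F p q) = 0 := by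
      rw [two_smul]
      nth_rewrite 2 [hswap]
      rw [← Finset.sum_add_distrib]
      refine Finset.sum_eq_zero fun p _ => ?_
      rw [← Finset.sum_add_distrib]
      refine Finset.sum_eq_zero fun q _ => ?_
      rw [hanti p q]; abel
    have := smul_right_injective (Fin 3 → ℝ) (by norm_num : (2:ℝ) ≠ 0)
    exact this (by simpa using h2)
  have hder : HasDerivAt (fun s => ∑ p : Fin N, w p • v p s)
      (∑ p : Fin N, w p • (E p t + crossProduct (v p t) (B p t) - U p t)) t := by
    apply HasDerivAt.fun_sum
    intro p _
    exact (hv p t).const_smul (w p)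
  have heq : ∑ p : Fin N, w p • (E p t + crossProduct (v p t) (B p t) - U p t)
      = ∑ p : Fin N, w p • (E p t + crossProduct (v p t) (B p t)) := by
    rw [← sub_zero (∑ p : Fin N, w p • (E p t + crossProduct (v p t) (B p t)))]
    rw [← key, ← Finset.sum_sub_distrib]
    exact Finset.sum_congr rfl fun p _ => by rw [← smul_sub]
  rwa [heq] at hder
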